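/- Let ψ : (0,∞) → (0,∞) be concave and increasing, and let ω be a singular dilation-invariant state on ℓ∞ (extended to nonnegative unbounded sequences as a supremum). Assume ω({ψ(2n+1)/ψ(n+1)}_{n≥0}) = 1. Then for any two nonincreasing nonnegative sequences a, b with finite τ_ω values, where τ_ω(x) = ω({(1/ψ(n+1)) ∑_{k=0}^{n} x(k)}_{n≥0}), one has τ_ω(a) + τ_ω(b) = ω({(1/ψ(2n+1)) ∑_{k=0}^{n} (a(k)+b(k))}_{n≥0}). -/

import Mathlib

open Filter
open scoped ENNReal

/-- A sequence `x : ℕ → ℝ` is bounded (an element of `ℓ∞`). -/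
def Bdd (x : ℕ → ℝ) : Prop := ∃ C, ∀ n, |x n| ≤ C

/-- A state on `ℓ∞`: a positive linear functional `ω` with `ω(1) = 1`.
We model it as a function on all sequences whose linearity and positivity
are only required on bounded sequences. -/
structure LinfState where
  toFun : (ℕ → ℝ) → ℝ
  map_add' : ∀ x y, Bdd x → Bdd y → toFun (x + y) = toFun x + toFun y
  map_smul' : ∀ (c : ℝ) (x), Bdd x → toFun (c • x) = c * toFun x
  pos' : ∀ x, Bdd x → (∀ n, 0 ≤ x n) → 0 ≤ toFun x
  map_one' : toFun (fun _ => (1 : ℝ)) = 1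

/-- The extension `ω̄` of a state `ω` to arbitrary nonnegative (possibly
unbounded) sequences, with values in `[0,∞]`:
`ω̄(x) = sup { ω(y) : y ∈ ℓ∞, 0 ≤ y ≤ x }`. -/
noncomputable def LinfState.ext (S : LinfState) (x : ℕ → ℝ) : ℝ≥0∞ :=
  ⨆ y ∈ {y : ℕ → ℝ | Bdd y ∧ (∀ n, 0 ≤ y n) ∧ ∀ n, y n ≤ x n},
    ENNReal.ofReal (S.toFun y)

/-- The `ψ`-Cesàro transform followed by the extended state `ω̄`. -/
noncomputable def tau (S : LinfState) (ψ : ℝ → ℝ) (a : ℕ → ℝ) : ℝ≥0∞ :=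
  S.ext (fun n => (∑ k ∈ Finset.range (n + 1), a k) / ψ ((n : ℝ) + 1))

lemma bdd_of_nonneg_le {x : ℕ → ℝ} (C : ℝ) (h0 : ∀ n, 0 ≤ x n)
    (h : ∀ n, x n ≤ C) : Bdd x :=
  ⟨C, fun n => abs_le.2 ⟨by linarith [h0 n, h0 0, h 0], h n⟩⟩

lemma LinfState.mono (S : LinfState) {x y : ℕ → ℝ} (hx : Bdd x) (hy : Bdd y)
    (h : ∀ n, x n ≤ y n) : S.toFun x ≤ S.toFun y := by
  obtain ⟨C, hC⟩ := hx
  obtain ⟨D, hD⟩ := hy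
  have hB : Bdd (y - x) := ⟨D + C, fun n => by
    have h1 := abs_le.mp (hC n)
    have h2 := abs_le.mp (hD n)
    simp only [Pi.sub_apply]
    rw [abs_le]
    constructor <;> linarith [h1.1, h1.2, h2.1, h2.2]⟩
  have hadd := S.map_add' x (y - x) ⟨C, hC⟩ hB
  have hxy : x + (y - x) = y := by funext n; simp
  rw [hxy] at hadd
  have hposd := S.pos' (y - x) hB (fun n => by simp [sub_nonneg, h n])
  linarith

lemma LinfState.le_ext (S : LinfState) {x y : ℕ → ℝ} (hy : Bdd y)
    (h0 : ∀ n, 0 ≤ y n) (hle : ∀ n, y n ≤ x n) :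
    ENNReal.ofReal (S.toFun y) ≤ S.ext x :=
  le_iSup₂ (f := fun y (_ : y ∈ {y : ℕ → ℝ | Bdd y ∧ (∀ n, 0 ≤ y n) ∧ ∀ n, y n ≤ x n}) =>
    ENNReal.ofReal (S.toFun y)) y ⟨hy, h0, hle⟩

lemma LinfState.ext_le (S : LinfState) {x : ℕ → ℝ} {c : ℝ≥0∞}
    (h : ∀ y : ℕ → ℝ, Bdd y → (∀ n, 0 ≤ y n) → (∀ n, y n ≤ x n) →
      ENNReal.ofReal (S.toFun y) ≤ c) : S.ext x ≤ c :=
  iSup₂_le fun y hy => h y hy.1 hy.2.1 hy.2.2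

lemma LinfState.ext_add (S : LinfState) (x y : ℕ → ℝ)
    (hx0 : ∀ n, 0 ≤ x n) (hy0 : ∀ n, 0 ≤ y n) :
    S.ext (fun n => x n + y n) = S.ext x + S.ext y := by
  have hzero : ∀ z : ℕ → ℝ, (∀ n, 0 ≤ z n) →
      (fun _ => (0:ℝ)) ∈ {y : ℕ → ℝ | Bdd y ∧ (∀ n, 0 ≤ y n) ∧ ∀ n, y n ≤ z n} :=
    fun z hz => ⟨⟨0, fun n => by simp⟩, fun n => le_rfl, fun n => hz n⟩
  apply le_antisymm
  · apply S.ext_le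
    intro w hwB hw0 hwle
    obtain ⟨C, hC⟩ := hwB
    set w1 : ℕ → ℝ := fun n => min (w n) (x n) with hw1
    set w2 : ℕ → ℝ := fun n => w n - w1 n with hw2
    have hw10 : ∀ n, 0 ≤ w1 n := fun n => le_min (hw0 n) (by
      by_contra hc
      push_neg at hc
      have := hwle n
      have := min_le_left (w n) (x n)
      simp only [hw1] at *
      nlinarith [hw0 n, hx0 n])
    have hw1B : Bdd w1 := bdd_of_nonneg_le C hw10
      (fun n => (min_le_left _ _).trans ((le_abs_self _).trans (hC n)))
    have hw20 : ∀ n, 0 ≤ w2 n := fun n => by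
      simp only [hw2, hw1, sub_nonneg]; exact min_le_left _ _
    have hw2B : Bdd w2 := bdd_of_nonneg_le C hw20
      (fun n => by
        have := (le_abs_self (w n)).trans (hC n)
        have := hw10 n
        simp only [hw2]
        linarith)
    have hw1le : ∀ n, w1 n ≤ x n := fun n => min_le_right _ _
    have hw2le : ∀ n, w2 n ≤ y n := fun n => by
      rcases le_total (w n) (x n) with h | h
      · simp only [hw2, hw1, min_eq_left h]; linarith [hy0 n]
      · simp only [hw2, hw1, min_eq_right h]; linarith [hwle n]
    have hsplit : w = fun n => w1 n + w2 n := by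
      funext n; simp [hw2]
    have hωw : S.toFun w = S.toFun w1 + S.toFun w2 := by
      rw [hsplit]
      exact S.map_add' w1 w2 hw1B hw2B
    rw [hωw, ENNReal.ofReal_add (S.pos' w1 hw1B hw10) (S.pos' w2 hw2B hw20)]
    exact add_le_add (S.le_ext hw1B hw10 hw1le) (S.le_ext hw2B hw20 hw2le)
  · rw [LinfState.ext, LinfState.ext]
    apply ENNReal.biSup_add_biSup_le ⟨_, hzero x hx0⟩ ⟨_, hzero y hy0⟩
    intro u hu v hv
    obtain ⟨huB, hu0, hule⟩ := hu
    obtain ⟨hvB, hv0, hvle⟩ := hv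
    rw [← ENNReal.ofReal_add (S.pos' u huB hu0) (S.pos' v hvB hv0),
      ← S.map_add' u v huB hvB]
    exact S.le_ext (by
        obtain ⟨C, hC⟩ := huB; obtain ⟨D, hD⟩ := hvB
        exact ⟨C + D, fun n => (abs_add_le _ _).trans (add_le_add (hC n) (hD n))⟩)
      (fun n => add_nonneg (hu0 n) (hv0 n))
      (fun n => add_le_add (hule n) (hvle n))

/-- key null lemma: `ω̄(x·z) = 0` if `ω̄(x) < ∞`, `0 ≤ z ≤ 1`, `ω(z) = 0`. -/
lemma LinfState.ext_mul_null (S : LinfState) {x z : ℕ → ℝ}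
    (hx0 : ∀ n, 0 ≤ x n) (hxfin : S.ext x < ⊤)
    (hzB : Bdd z) (hz0 : ∀ n, 0 ≤ z n) (hz1 : ∀ n, z n ≤ 1)
    (hωz : S.toFun z = 0) :
    S.ext (fun n => x n * z n) = 0 := by
  refine le_antisymm (S.ext_le fun y hyB hy0 hyle => ?_) zero_le
  suffices hy : S.toFun y ≤ 0 by simp [ENNReal.ofReal_eq_zero.2 hy]
  by_contra hc
  push_neg at hc
  have hδ : (0:ℝ) < S.toFun y / 2 := by linarith
  set δ := S.toFun y / 2 with hδdef
  -- choose y₀ near sup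
  have hne : S.ext x ≠ ⊤ := hxfin.ne
  have hexists : ∃ y₀ : ℕ → ℝ, Bdd y₀ ∧ (∀ n, 0 ≤ y₀ n) ∧ (∀ n, y₀ n ≤ x n) ∧
      S.ext x ≤ ENNReal.ofReal (S.toFun y₀) + ENNReal.ofReal δ := by
    by_cases h0 : S.ext x = 0
    · exact ⟨fun _ => 0, ⟨0, fun n => by simp⟩, fun n => le_rfl, fun n => hx0 n,
        by rw [h0]; exact zero_le⟩
    · have hlt : S.ext x - ENNReal.ofReal δ < S.ext x :=
        ENNReal.sub_lt_self hne h0 (by simp [ENNReal.ofReal_pos, hδ])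
      rw [LinfState.ext] at hlt
      rw [lt_iSup_iff] at hlt
      obtain ⟨y₀, hy₀⟩ := hlt
      rw [lt_iSup_iff] at hy₀
      obtain ⟨⟨hy₀B, hy₀0, hy₀le⟩, hlt'⟩ := hy₀
      refine ⟨y₀, hy₀B, hy₀0, hy₀le, ?_⟩
      rw [LinfState.ext]
      exact tsub_le_iff_right.mp hlt'.le
  obtain ⟨y₀, hy₀B, hy₀0, hy₀le, hnear⟩ := hexists
  obtain ⟨M, hM⟩ := hy₀B
  have hM0 : 0 ≤ M := (abs_nonneg _).trans (hM 0)
  -- m = min(x, M)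
  set m : ℕ → ℝ := fun n => min (x n) M with hm
  have hm0 : ∀ n, 0 ≤ m n := fun n => le_min (hx0 n) hM0
  have hmB : Bdd m := bdd_of_nonneg_le M hm0 (fun n => min_le_right _ _)
  have hmle : ∀ n, m n ≤ x n := fun n => min_le_left _ _
  have hy₀m : S.toFun y₀ ≤ S.toFun m :=
    S.mono ⟨M, hM⟩ hmB (fun n => le_min (hy₀le n) ((le_abs_self _).trans (hM n)))
  have hnear' : S.ext x ≤ ENNReal.ofReal (S.toFun m) + ENNReal.ofReal δ :=
    hnear.trans (add_le_add_left (ENNReal.ofReal_le_ofReal hy₀m) _)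
  -- w = y - min(y, M z)
  set v : ℕ → ℝ := fun n => min (y n) (M * z n) with hv
  set w : ℕ → ℝ := fun n => y n - v n with hw
  obtain ⟨Cy, hCy⟩ := hyB
  have hv0 : ∀ n, 0 ≤ v n := fun n => le_min (hy0 n) (mul_nonneg hM0 (hz0 n))
  have hvB : Bdd v := bdd_of_nonneg_le Cy hv0
    (fun n => (min_le_left _ _).trans ((le_abs_self _).trans (hCy n)))
  have hw0 : ∀ n, 0 ≤ w n := fun n => by
    simp only [hw, hv, sub_nonneg]; exact min_le_left _ _
  have hwB : Bdd w := bdd_of_nonneg_le Cy hw0 (fun n => by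
    have := (le_abs_self (y n)).trans (hCy n)
    have := hv0 n
    simp only [hw]; linarith)
  -- w n + m n ≤ x n
  have hkey : ∀ n, w n + m n ≤ x n := by
    intro n
    have hyn := hyle n
    have hz1n := hz1 n
    have hz0n := hz0 n
    have hx0n := hx0 n
    simp only [hw, hv, hm]
    rcases le_total (y n) (M * z n) with h | h
    · rw [min_eq_left h]; simp
    · rw [min_eq_right h]
      rcases le_total M (x n) with h2 | h2
      · rw [min_eq_right h2]
        nlinarith [(x n - M) * (1 - z n)]
      · rw [min_eq_left h2]
        nlinarith
  -- hence ofReal (ω w) ≤ ofReal δ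
  have hwm : ENNReal.ofReal (S.toFun w) + ENNReal.ofReal (S.toFun m) ≤ S.ext x := by
    rw [← ENNReal.ofReal_add (S.pos' w hwB hw0) (S.pos' m hmB hm0),
      ← S.map_add' w m hwB hmB]
    exact S.le_ext
      (by obtain ⟨C1, h1⟩ := hwB; obtain ⟨C2, h2⟩ := hmB
          exact ⟨C1 + C2, fun n => (abs_add_le _ _).trans (add_le_add (h1 n) (h2 n))⟩)
      (fun n => add_nonneg (hw0 n) (hm0 n)) hkey
  have hδw : ENNReal.ofReal (S.toFun w) ≤ ENNReal.ofReal δ := by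
    have h1 : ENNReal.ofReal (S.toFun w) + ENNReal.ofReal (S.toFun m) ≤
        ENNReal.ofReal (S.toFun m) + ENNReal.ofReal δ := hwm.trans hnear'
    rw [add_comm (ENNReal.ofReal (S.toFun m)) (ENNReal.ofReal δ)] at h1
    exact ENNReal.le_of_add_le_add_right ENNReal.ofReal_ne_top h1
  have hwδ : S.toFun w ≤ δ := by
    have := (ENNReal.ofReal_le_ofReal_iff hδ.le).mp hδw
    exact this
  -- ω v ≤ M ω z = 0
  have hvz : S.toFun v ≤ 0 := by
    have hMz : Bdd (M • z) := by
      obtain ⟨Cz, hCz⟩ := hzB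
      exact ⟨M * Cz, fun n => by
        simp only [Pi.smul_apply, smul_eq_mul, abs_mul, abs_of_nonneg hM0]
        exact mul_le_mul_of_nonneg_left (hCz n) hM0⟩
    have := S.mono hvB hMz (fun n => by
      simp only [Pi.smul_apply, smul_eq_mul]; exact min_le_right _ _)
    rw [S.map_smul' M z hzB, hωz, mul_zero] at this
    exact this
  -- combine: ω y = ω v + ω w ≤ δ = ω y / 2, contradiction
  have hyvw : S.toFun y = S.toFun v + S.toFun w := by
    have : y = fun n => v n + w n := by funext n; simp [hw]
    rw [this]
    exact S.map_add' v w hvB hwB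
  simp only [hδdef] at hwδ
  linarith [hyvw, hvz, hwδ, hc]

/-- If `ω` is a singular dilation-invariant state with
`ω({ψ(2n+1)/ψ(n+1)}) = 1`, then for any two nonincreasing nonnegative
sequences `a, b` with finite `τ_ω`-values,
`τ_ω(a) + τ_ω(b) = ω̄({(1/ψ(2n+1)) ∑_{k=0}^{n} (a(k)+b(k))})`. -/
theorem tau_add_eq (S : LinfState) (ψ : ℝ → ℝ)
    (hpos : ∀ t > (0 : ℝ), 0 < ψ t)
    (hmono : MonotoneOn ψ (Set.Ioi (0 : ℝ)))
    (hconc : ConcaveOn ℝ (Set.Ioi (0 : ℝ)) ψ)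
    (hsing : ∀ x : ℕ → ℝ, Bdd x → Tendsto x atTop (nhds 0) → S.toFun x = 0)
    (hdilinv : ∀ n : ℕ, 1 ≤ n → ∀ x : ℕ → ℝ, Bdd x →
      S.toFun (fun k => x (k / n)) = S.toFun x)
    (hω1 : S.toFun (fun n => ψ (2 * (n : ℝ) + 1) / ψ ((n : ℝ) + 1)) = 1)
    (a b : ℕ → ℝ) (ha : Antitone a) (hb : Antitone b)
    (ha0 : ∀ k, 0 ≤ a k) (hb0 : ∀ k, 0 ≤ b k)
    (hafin : tau S ψ a < ⊤) (hbfin : tau S ψ b < ⊤) :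
    tau S ψ a + tau S ψ b =
      S.ext (fun n => (∑ k ∈ Finset.range (n + 1), (a k + b k)) /
        ψ (2 * (n : ℝ) + 1)) := by
  have hp1 : ∀ n : ℕ, (0:ℝ) < (n:ℝ) + 1 := fun n => by positivity
  have hp2 : ∀ n : ℕ, (0:ℝ) < 2*(n:ℝ) + 1 := fun n => by positivity
  have hψ1 : ∀ n : ℕ, 0 < ψ ((n:ℝ)+1) := fun n => hpos _ (hp1 n)
  have hψ2 : ∀ n : ℕ, 0 < ψ (2*(n:ℝ)+1) := fun n => hpos _ (hp2 n)
  have hψle : ∀ n : ℕ, ψ ((n:ℝ)+1) ≤ ψ (2*(n:ℝ)+1) := fun n =>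
    hmono (Set.mem_Ioi.2 (hp1 n)) (Set.mem_Ioi.2 (hp2 n))
      (by linarith [Nat.cast_nonneg (α := ℝ) n])
  have hψ2le : ∀ n : ℕ, ψ (2*(n:ℝ)+1) ≤ 2 * ψ ((n:ℝ)+1) := by
    intro n
    have h1 : (1:ℝ) ∈ Set.Ioi (0:ℝ) := by norm_num
    have h2 : (2*(n:ℝ)+1) ∈ Set.Ioi (0:ℝ) := Set.mem_Ioi.2 (hp2 n)
    have hcc := hconc.2 h1 h2 (by norm_num : (0:ℝ) ≤ 1/2) (by norm_num : (0:ℝ) ≤ 1/2)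
      (by norm_num)
    have harg : (1/2:ℝ) • (1:ℝ) + (1/2:ℝ) • (2*(n:ℝ)+1) = (n:ℝ)+1 := by
      simp only [smul_eq_mul]; ring
    rw [harg] at hcc
    simp only [smul_eq_mul] at hcc
    have hψ1pos := hpos 1 one_pos
    linarith
  set u : ℕ → ℝ := fun n => ψ (2*(n:ℝ)+1) / ψ ((n:ℝ)+1) with hu
  set z : ℕ → ℝ := fun n => 1 - ψ ((n:ℝ)+1) / ψ (2*(n:ℝ)+1) with hz
  have hu1 : ∀ n, 1 ≤ u n := fun n => (one_le_div (hψ1 n)).2 (hψle n)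
  have hu2 : ∀ n, u n ≤ 2 := fun n => (div_le_iff₀ (hψ1 n)).2 (by linarith [hψ2le n])
  have hz0 : ∀ n, 0 ≤ z n := fun n => by
    have := (div_le_one (hψ2 n)).2 (hψle n)
    simp only [hz]; linarith
  have hz1 : ∀ n, z n ≤ 1 := fun n => by
    have : 0 ≤ ψ ((n:ℝ)+1) / ψ (2*(n:ℝ)+1) := (div_pos (hψ1 n) (hψ2 n)).le
    simp only [hz]; linarith
  have hzB : Bdd z := bdd_of_nonneg_le 1 hz0 hz1
  have hωu : S.toFun u = 1 := hω1
  have hωu1 : S.toFun (fun n => u n - 1) = 0 := by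
    have hadd := S.map_add' (fun n => u n - 1) (fun _ => 1)
      (bdd_of_nonneg_le 1 (fun n => by linarith [hu1 n]) (fun n => by linarith [hu2 n]))
      ⟨1, fun n => by norm_num⟩
    have he : (fun n => u n - 1) + (fun _ => (1:ℝ)) = u := by funext n; simp
    rw [he, hωu, S.map_one'] at hadd
    linarith
  have hzle : ∀ n, z n ≤ u n - 1 := by
    intro n
    have e1 : z n = (ψ (2*(n:ℝ)+1) - ψ ((n:ℝ)+1)) / ψ (2*(n:ℝ)+1) := by
      simp only [hz]; rw [sub_div, div_self (hψ2 n).ne']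
    have e2 : u n - 1 = (ψ (2*(n:ℝ)+1) - ψ ((n:ℝ)+1)) / ψ ((n:ℝ)+1) := by
      simp only [hu]; rw [sub_div, div_self (hψ1 n).ne']
    rw [e1, e2]
    gcongr
    · linarith [hψle n]
    · exact hψ1 n
    · exact hψle n
  have hωz : S.toFun z = 0 := le_antisymm
    (by
      have := S.mono hzB
        (bdd_of_nonneg_le 1 (fun n => by linarith [hu1 n]) (fun n => by linarith [hu2 n]))
        hzle
      rw [hωu1] at this
      exact this)
    (S.pos' z hzB hz0)
  -- the Cesàro sequences
  set xa : ℕ → ℝ := fun n => (∑ k ∈ Finset.range (n + 1), a k) / ψ ((n : ℝ) + 1) with hxa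
  set xb : ℕ → ℝ := fun n => (∑ k ∈ Finset.range (n + 1), b k) / ψ ((n : ℝ) + 1) with hxb
  set T : ℕ → ℝ := fun n => (∑ k ∈ Finset.range (n + 1), (a k + b k)) /
        ψ (2 * (n : ℝ) + 1) with hT
  have hta : tau S ψ a = S.ext xa := by rw [hxa]; rfl
  have htb : tau S ψ b = S.ext xb := by rw [hxb]; rfl
  have hxa0 : ∀ n, 0 ≤ xa n := fun n => by
    simp only [hxa]
    exact div_nonneg (Finset.sum_nonneg fun k _ => ha0 k) (hψ1 n).le
  have hxb0 : ∀ n, 0 ≤ xb n := fun n => by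
    simp only [hxb]
    exact div_nonneg (Finset.sum_nonneg fun k _ => hb0 k) (hψ1 n).le
  have hT0 : ∀ n, 0 ≤ T n := fun n => by
    simp only [hT]
    exact div_nonneg (Finset.sum_nonneg fun k _ => add_nonneg (ha0 k) (hb0 k)) (hψ2 n).le
  have hW0 : ∀ n, 0 ≤ (xa n + xb n) * z n := fun n =>
    mul_nonneg (add_nonneg (hxa0 n) (hxb0 n)) (hz0 n)
  have hXadd : S.ext (fun n => xa n + xb n) = S.ext xa + S.ext xb :=
    S.ext_add xa xb hxa0 hxb0
  have hXfin : S.ext (fun n => xa n + xb n) < ⊤ := by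
    rw [hXadd, ← hta, ← htb]
    exact ENNReal.add_lt_top.2 ⟨hafin, hbfin⟩
  have hnull : S.ext (fun n => (xa n + xb n) * z n) = 0 :=
    S.ext_mul_null (fun n => add_nonneg (hxa0 n) (hxb0 n)) hXfin hzB hz0 hz1 hωz
  have hTsplit : (fun n => xa n + xb n) = fun n => T n + (xa n + xb n) * z n := by
    funext n
    have hsum : ∑ k ∈ Finset.range (n+1), (a k + b k) =
        (∑ k ∈ Finset.range (n+1), a k) + ∑ k ∈ Finset.range (n+1), b k :=
      Finset.sum_add_distrib
    simp only [hxa, hxb, hz, hT, hsum]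
    field_simp [(hψ1 n).ne', (hψ2 n).ne']
    ring
  calc tau S ψ a + tau S ψ b = S.ext xa + S.ext xb := by rw [hta, htb]
    _ = S.ext (fun n => xa n + xb n) := hXadd.symm
    _ = S.ext (fun n => T n + (xa n + xb n) * z n) := by rw [hTsplit]
    _ = S.ext T + S.ext (fun n => (xa n + xb n) * z n) :=
        S.ext_add T (fun n => (xa n + xb n) * z n) hT0 hW0
    _ = S.ext T := by rw [hnull, add_zero]
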